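/- (Input-to-state estimate for delayed linear time-varying systems via contraction.) Let τ_max ≥ 0 be finite, let τ : [t₀,∞) → [0, τ_max], and let e : [t₀ − τ_max, ∞) → ℝ^m be continuous, bounded on [t₀ − τ_max, t₀], differentiable on [t₀, ∞), and satisfy ė(t) = A(t)e(t) + B(t)e(t − τ(t)) + w(t) for all t ≥ t₀, where A(t), B(t) ∈ ℝ^{m×m} and w : [t₀,∞) → ℝ^m is bounded. Let |·| be a norm on ℝ^m with induced matrix norm ‖·‖ and matrix measure μ, and suppose there exist 0 ≤ σ̲ < σ̄ < ∞ such that μ(A(t)) ≤ −σ̄ and ‖B(t)‖ ≤ σ̲ for all t ≥ t₀. Then for all t ≥ t₀, |e(t)| ≤ (sup_{t₀ − τ_max ≤ s ≤ t₀} |e(s)|)·e^{−λ̂(t−t₀)} + (sup_{s ≥ t₀} |w(s)|)/(σ̄ − σ̲), where λ̂ := inf_{t ≥ t₀} { λ : λ − σ̄ + σ̲·e^{λτ(t)} = 0, λ > 0 } is positive. -/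

import Mathlib

open Filter Set

/-- `ν` is a norm on the real vector space `E`. -/
def IsNorm {E : Type*} [AddCommGroup E] [Module ℝ E] (ν : E → ℝ) : Prop :=
  (∀ x, 0 ≤ ν x) ∧ (∀ x, ν x = 0 → x = 0) ∧
  (∀ (a : ℝ) (x : E), ν (a • x) = |a| * ν x) ∧
  (∀ x y : E, ν (x + y) ≤ ν x + ν y)

/-- The operator norm of a map `L` with respect to a norm `νE` on the domain and a norm
`νF` on the codomain: the supremum of `νF (L x)` over the unit sphere `νE x = 1`. -/
noncomputable def opNorm {E F : Type*} (νE : E → ℝ) (νF : F → ℝ) (L : E → F) : ℝ :=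
  sSup {c | ∃ x, νE x = 1 ∧ c = νF (L x)}

/-- `μ` is the matrix measure (logarithmic norm) of the linear map `L` with respect to the
norm `ν`, i.e. `μ = lim_{h→0⁺} (‖I + hL‖ − 1)/h` where `‖·‖` is the operator norm
induced by `ν`. -/
def HasMatMeasure {E : Type*} [Add E] [SMul ℝ E] (ν : E → ℝ) (L : E → E) (μ : ℝ) : Prop :=
  Tendsto (fun h : ℝ => (opNorm ν ν (fun x => x + h • L x) - 1) / h)
    (nhdsWithin (0 : ℝ) (Set.Ioi 0)) (nhds μ)

open Topology

section AuxNorm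

variable {m : ℕ} {ν : (Fin m → ℝ) → ℝ}

lemma IsNorm.nonneg (hν : IsNorm ν) (x : Fin m → ℝ) : 0 ≤ ν x := hν.1 x

lemma IsNorm.triangle (hν : IsNorm ν) (x y : Fin m → ℝ) : ν (x + y) ≤ ν x + ν y := hν.2.2.2 x y

lemma IsNorm.smul' (hν : IsNorm ν) (a : ℝ) (x : Fin m → ℝ) : ν (a • x) = |a| * ν x :=
  hν.2.2.1 a x

lemma IsNorm.zero' (hν : IsNorm ν) : ν 0 = 0 := by
  have h := hν.smul' 0 0
  simpa using h

lemma IsNorm.neg' (hν : IsNorm ν) (x : Fin m → ℝ) : ν (-x) = ν x := by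
  have h := hν.smul' (-1) x
  simpa using h

lemma IsNorm.smul_nonneg' (hν : IsNorm ν) {a : ℝ} (ha : 0 ≤ a) (x : Fin m → ℝ) :
    ν (a • x) = a * ν x := by rw [hν.smul', abs_of_nonneg ha]

lemma IsNorm.sum_le (hν : IsNorm ν) {ι : Type*} (s : Finset ι) (f : ι → Fin m → ℝ) :
    ν (∑ i ∈ s, f i) ≤ ∑ i ∈ s, ν (f i) := by
  classical
  induction s using Finset.induction_on with
  | empty => simp [hν.zero']
  | insert _ _ h ih =>
    rw [Finset.sum_insert h, Finset.sum_insert h]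
    exact (hν.triangle _ _).trans (by linarith)

lemma IsNorm.exists_K (hν : IsNorm ν) :
    ∃ K : ℝ, 0 < K ∧ ∀ x, ν x ≤ K * ‖x‖ := by
  classical
  set K : ℝ := (∑ i : Fin m, ν (fun j => if i = j then 1 else 0)) + 1 with hK
  have hs : 0 ≤ ∑ i : Fin m, ν (fun j => if i = j then 1 else 0) :=
    Finset.sum_nonneg fun i _ => hν.1 _
  refine ⟨K, by linarith, fun x => ?_⟩
  have hx : ν x ≤ ∑ i : Fin m, ν ((x i) • fun j => if i = j then (1:ℝ) else 0) := by
    conv_lhs => rw [pi_eq_sum_univ x]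
    exact hν.sum_le _ _
  have hx2 : ∀ i : Fin m, ν ((x i) • fun j => if i = j then (1:ℝ) else 0)
      ≤ ‖x‖ * ν (fun j => if i = j then (1:ℝ) else 0) := by
    intro i
    rw [hν.smul']
    have h1 : |x i| ≤ ‖x‖ := by
      have := norm_le_pi_norm x i
      simpa [Real.norm_eq_abs] using this
    exact mul_le_mul_of_nonneg_right h1 (hν.1 _)
  calc ν x ≤ ∑ i : Fin m, ‖x‖ * ν (fun j => if i = j then (1:ℝ) else 0) :=
        hx.trans (Finset.sum_le_sum fun i _ => hx2 i)
    _ = (∑ i : Fin m, ν (fun j => if i = j then (1:ℝ) else 0)) * ‖x‖ := by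
        rw [Finset.sum_mul]; exact Finset.sum_congr rfl fun i _ => mul_comm _ _
    _ ≤ K * ‖x‖ := by
        have := norm_nonneg x; nlinarith

lemma IsNorm.abs_sub_le (hν : IsNorm ν) (x y : Fin m → ℝ) : |ν x - ν y| ≤ ν (x - y) := by
  have h1 : ν x - ν y ≤ ν (x - y) := by
    have := hν.triangle (x - y) y; simp at this; linarith
  have h2 : ν y - ν x ≤ ν (x - y) := by
    have := hν.triangle (y - x) x; simp at this
    have hn : ν (y - x) = ν (x - y) := by rw [← hν.neg' (x - y)]; congr 1; abel
    linarith
  exact abs_sub_le_iff.mpr ⟨h1, h2⟩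

lemma IsNorm.continuous' (hν : IsNorm ν) : Continuous ν := by
  obtain ⟨K, hK, hKle⟩ := hν.exists_K
  have : LipschitzWith (Real.toNNReal K) ν := by
    refine LipschitzWith.of_dist_le_mul fun x y => ?_
    rw [Real.dist_eq, dist_eq_norm, Real.coe_toNNReal _ hK.le]
    exact (hν.abs_sub_le x y).trans (hKle _)
  exact this.continuous

lemma IsNorm.pos_of_ne (hν : IsNorm ν) {x : Fin m → ℝ} (hx : x ≠ 0) : 0 < ν x := by
  rcases (hν.1 x).lt_or_eq with h | h
  · exact h
  · exact absurd (hν.2.1 x h.symm) hx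

lemma IsNorm.exists_c (hν : IsNorm ν) (hm : 0 < m) :
    ∃ c : ℝ, 0 < c ∧ ∀ x, c * ‖x‖ ≤ ν x := by
  haveI : Nonempty (Fin m) := ⟨⟨0, hm⟩⟩
  have hsph : (Metric.sphere (0 : Fin m → ℝ) 1).Nonempty := by
    refine ⟨fun _ => (1:ℝ), ?_⟩
    rw [mem_sphere_zero_iff_norm]
    simp
  obtain ⟨z, hz, hzmin⟩ := (isCompact_sphere (0 : Fin m → ℝ) 1).exists_isMinOn hsph
      hν.continuous'.continuousOn
  have hz1 : ‖z‖ = 1 := mem_sphere_zero_iff_norm.mp hz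
  have hzpos : 0 < ν z := hν.pos_of_ne (by intro h; rw [h] at hz1; simp at hz1)
  refine ⟨ν z, hzpos, fun x => ?_⟩
  rcases eq_or_ne x 0 with rfl | hx
  · simp [hν.zero']
  · have hnx : 0 < ‖x‖ := norm_pos_iff.mpr hx
    have hu : (‖x‖⁻¹ • x) ∈ Metric.sphere (0 : Fin m → ℝ) 1 := by
      rw [mem_sphere_zero_iff_norm, norm_smul]
      simp [abs_of_pos hnx, inv_mul_cancel₀ hnx.ne']
    have hle : ν z ≤ ν (‖x‖⁻¹ • x) := hzmin hu
    rw [hν.smul_nonneg' (by positivity)] at hle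
    calc ν z * ‖x‖ ≤ (‖x‖⁻¹ * ν x) * ‖x‖ := mul_le_mul_of_nonneg_right hle hnx.le
      _ = ν x := by field_simp

lemma IsNorm.exists_unit (hν : IsNorm ν) (hm : 0 < m) : ∃ u : Fin m → ℝ, ν u = 1 := by
  haveI : Nonempty (Fin m) := ⟨⟨0, hm⟩⟩
  have hx : (fun _ : Fin m => (1:ℝ)) ≠ 0 := by
    intro h
    have := congrFun h ⟨0, hm⟩
    simpa using this
  have hpos : 0 < ν (fun _ : Fin m => (1:ℝ)) := hν.pos_of_ne hx
  refine ⟨(ν (fun _ : Fin m => (1:ℝ)))⁻¹ • (fun _ : Fin m => (1:ℝ)), ?_⟩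
  rw [hν.smul_nonneg' (by positivity), inv_mul_cancel₀ hpos.ne']

end AuxNorm

section AuxOp

variable {m : ℕ} {ν : (Fin m → ℝ) → ℝ}

lemma opNorm_set_bddAbove (hν : IsNorm ν) (hm : 0 < m)
    (L : (Fin m → ℝ) →ₗ[ℝ] (Fin m → ℝ)) :
    BddAbove {c | ∃ x, ν x = 1 ∧ c = ν (L x)} := by
  obtain ⟨K, hK, hKle⟩ := hν.exists_K
  obtain ⟨c, hc, hcle⟩ := hν.exists_c hm
  set CL : ℝ := ‖LinearMap.toContinuousLinearMap L‖ with hCL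
  have hCL0 : 0 ≤ CL := norm_nonneg _
  refine ⟨K * CL / c, ?_⟩
  rintro r ⟨x, hx, rfl⟩
  have h1 : ‖x‖ ≤ 1 / c := by
    rw [le_div_iff₀ hc]
    have := hcle x
    rw [hx] at this
    linarith [this]
  have h2 : ‖L x‖ ≤ CL * ‖x‖ := by
    have := (LinearMap.toContinuousLinearMap L).le_opNorm x
    rwa [LinearMap.coe_toContinuousLinearMap'] at this
  calc ν (L x) ≤ K * ‖L x‖ := hKle _
    _ ≤ K * (CL * ‖x‖) := mul_le_mul_of_nonneg_left h2 hK.le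
    _ ≤ K * (CL * (1 / c)) :=
        mul_le_mul_of_nonneg_left (mul_le_mul_of_nonneg_left h1 hCL0) hK.le
    _ = K * CL / c := by ring

lemma opNorm_set_nonempty (hν : IsNorm ν) (hm : 0 < m) (f : (Fin m → ℝ) → (Fin m → ℝ)) :
    {c | ∃ x, ν x = 1 ∧ c = ν (f x)}.Nonempty := by
  obtain ⟨u, hu⟩ := hν.exists_unit hm
  exact ⟨ν (f u), u, hu, rfl⟩

lemma nu_apply_le (hν : IsNorm ν) (hm : 0 < m)
    (L : (Fin m → ℝ) →ₗ[ℝ] (Fin m → ℝ)) (x : Fin m → ℝ) :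
    ν (L x) ≤ opNorm ν ν ⇑L * ν x := by
  have hbdd := opNorm_set_bddAbove hν hm L
  rcases eq_or_ne x 0 with rfl | hx
  · obtain ⟨u, hu⟩ := hν.exists_unit hm
    have h0 : (0:ℝ) ≤ opNorm ν ν ⇑L :=
      (hν.1 (L u)).trans (le_csSup hbdd ⟨u, hu, rfl⟩)
    simp [map_zero, hν.zero']
  · have hpos : 0 < ν x := hν.pos_of_ne hx
    set u := (ν x)⁻¹ • x with hu
    have hu1 : ν u = 1 := by
      rw [hu, hν.smul_nonneg' (by positivity), inv_mul_cancel₀ hpos.ne']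
    have hmem : ν (L u) ≤ opNorm ν ν ⇑L := le_csSup hbdd ⟨u, hu1, rfl⟩
    have hLu : ν (L u) = (ν x)⁻¹ * ν (L x) := by
      rw [hu, map_smul, hν.smul_nonneg' (by positivity)]
    rw [hLu] at hmem
    calc ν (L x) = ((ν x)⁻¹ * ν (L x)) * ν x := by field_simp
      _ ≤ opNorm ν ν ⇑L * ν x := mul_le_mul_of_nonneg_right hmem hpos.le

lemma opNorm_le_of (hν : IsNorm ν) (hm : 0 < m)
    (f : (Fin m → ℝ) → (Fin m → ℝ)) {b : ℝ} (h : ∀ x, ν x = 1 → ν (f x) ≤ b) :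
    opNorm ν ν f ≤ b := by
  refine csSup_le (opNorm_set_nonempty hν hm f) ?_
  rintro r ⟨x, hx, rfl⟩
  exact h x hx

lemma opNorm_set_bddAbove' (hν : IsNorm ν) (hm : 0 < m)
    (f : (Fin m → ℝ) → (Fin m → ℝ))
    (hf : ∃ L : (Fin m → ℝ) →ₗ[ℝ] (Fin m → ℝ), ⇑L = f) :
    BddAbove {c | ∃ x, ν x = 1 ∧ c = ν (f x)} := by
  obtain ⟨L, rfl⟩ := hf
  exact opNorm_set_bddAbove hν hm L

lemma coe_id_add_smul (A : Matrix (Fin m) (Fin m) ℝ) (h : ℝ) :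
    (fun x : Fin m → ℝ => x + h • A.mulVec x)
      = ⇑((LinearMap.id + h • A.mulVecLin : (Fin m → ℝ) →ₗ[ℝ] (Fin m → ℝ))) := by
  funext x
  simp [Matrix.mulVecLin_apply]

lemma coe_mulVecLin (A : Matrix (Fin m) (Fin m) ℝ) :
    A.mulVec = ⇑A.mulVecLin := by
  funext x; simp [Matrix.mulVecLin_apply]

lemma exists_matMeasure (hν : IsNorm ν) (hm : 0 < m) (A : Matrix (Fin m) (Fin m) ℝ) :
    ∃ μA : ℝ, HasMatMeasure ν A.mulVec μA := by
  obtain ⟨u, hu⟩ := hν.exists_unit hm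
  set g : ℝ → ℝ :=
    fun h => (opNorm ν ν (fun x : Fin m → ℝ => x + h • A.mulVec x) - 1) / h with hg
  set Q : ℝ → ℝ :=
    fun h => opNorm ν ν (fun x : Fin m → ℝ => x + h • A.mulVec x) with hQ
  have hQle : ∀ h : ℝ, ∀ x, ν (x + h • A.mulVec x) ≤ Q h * ν x := by
    intro h x
    have h1 := nu_apply_le hν hm
      ((LinearMap.id + h • A.mulVecLin : (Fin m → ℝ) →ₗ[ℝ] (Fin m → ℝ))) x
    rw [← coe_id_add_smul] at h1
    exact h1
  have hQge : ∀ h : ℝ, 0 < h → 1 - h * ν (A.mulVec u) ≤ Q h := by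
    intro h hh
    have hbdd : BddAbove {c | ∃ x, ν x = 1 ∧ c = ν (x + h • A.mulVec x)} :=
      opNorm_set_bddAbove' hν hm _
        ⟨(LinearMap.id + h • A.mulVecLin : (Fin m → ℝ) →ₗ[ℝ] (Fin m → ℝ)),
          (coe_id_add_smul A h).symm⟩
    have hmem : ν (u + h • A.mulVec u) ≤ Q h := le_csSup hbdd ⟨u, hu, rfl⟩
    have htri : ν u ≤ ν (u + h • A.mulVec u) + ν (h • A.mulVec u) := by
      have := hν.triangle (u + h • A.mulVec u) (-(h • A.mulVec u))
      simpa [hν.neg'] using this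
    rw [hu, hν.smul_nonneg' hh.le] at htri
    linarith
  have hmono : MonotoneOn g (Set.Ioi (0:ℝ)) := by
    rintro h1 (h1m : 0 < h1) h2 (h2m : 0 < h2) h12
    set θ : ℝ := h1 / h2 with hθ
    have hθpos : 0 < θ := div_pos h1m h2m
    have hθle : θ ≤ 1 := (div_le_one h2m).mpr h12
    have hQ1 : Q h1 ≤ (1 - θ) + θ * Q h2 := by
      refine opNorm_le_of hν hm _ fun x hx => ?_
      have hkey : x + h1 • A.mulVec x = (1 - θ) • x + θ • (x + h2 • A.mulVec x) := by
        have hh1 : h1 = θ * h2 := by rw [hθ]; field_simp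
        rw [hh1]
        module
      rw [hkey]
      calc ν ((1 - θ) • x + θ • (x + h2 • A.mulVec x))
          ≤ ν ((1 - θ) • x) + ν (θ • (x + h2 • A.mulVec x)) := hν.triangle _ _
        _ = (1 - θ) * ν x + θ * ν (x + h2 • A.mulVec x) := by
            rw [hν.smul_nonneg' (by linarith), hν.smul_nonneg' hθpos.le]
        _ ≤ (1 - θ) + θ * Q h2 := by
            have h1' := hQle h2 x
            rw [hx] at h1' ⊢
            have : ν (x + h2 • A.mulVec x) ≤ Q h2 := by simpa using h1'
            nlinarith
    have target : (Q h1 - 1) / h1 ≤ (Q h2 - 1) / h2 := by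
      rw [div_le_div_iff₀ h1m h2m]
      have h3 : (Q h1 - 1) * h2 ≤ ((1 - θ) + θ * Q h2 - 1) * h2 :=
        mul_le_mul_of_nonneg_right (by linarith) h2m.le
      refine h3.trans ?_
      have hθh : θ * h2 = h1 := by rw [hθ]; field_simp
      have : ((1 - θ) + θ * Q h2 - 1) * h2 = (Q h2 - 1) * (θ * h2) := by ring
      rw [this, hθh]
    exact target
  have hbddB : BddBelow (g '' Set.Ioi (0:ℝ)) := by
    refine ⟨-(ν (A.mulVec u)), ?_⟩
    rintro r ⟨h, (hh : 0 < h), rfl⟩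
    have h1 := hQge h hh
    show -(ν (A.mulVec u)) ≤ (Q h - 1) / h
    rw [le_div_iff₀ hh]
    nlinarith
  exact ⟨_, hmono.tendsto_nhdsGT hbddB⟩

end AuxOp

set_option maxHeartbeats 2000000 in
/-- **input-to-state estimate for delayed linear time-varying systems.**
Let `e` be continuous on `[t₀−τ_max, ∞)`, bounded on `[t₀−τ_max, t₀]`, and satisfy
`ė(t) = A(t)e(t) + B(t)e(t−τ(t)) + w(t)` for `t ≥ t₀` with `w` bounded.  If
`μ(A(t)) ≤ −σ̄` and `‖B(t)‖ ≤ σ̲` for all `t ≥ t₀`, where `0 ≤ σ̲ < σ̄ < ∞`, then `λ̂ > 0`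
and for all `t ≥ t₀`,
`|e(t)| ≤ (sup_{t₀−τ_max≤s≤t₀}|e(s)|)·e^{−λ̂(t−t₀)} + (sup_{s≥t₀}|w(s)|)/(σ̄−σ̲)`,
where `λ̂ = inf_{t≥t₀} {λ > 0 : λ − σ̄ + σ̲·e^{λτ(t)} = 0}`. -/
theorem iss_delayed_ltv_contraction
    {m : ℕ} (t0 τmax : ℝ) (hτmax : 0 ≤ τmax)
    (τ : ℝ → ℝ) (hτ : ∀ t, 0 ≤ τ t ∧ τ t ≤ τmax)
    (e w : ℝ → Fin m → ℝ) (A B : ℝ → Matrix (Fin m) (Fin m) ℝ)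
    (ν : (Fin m → ℝ) → ℝ) (hν : IsNorm ν)
    (σlo σhi : ℝ) (hσlo : 0 ≤ σlo) (hσ : σlo < σhi)
    (he_cont : ContinuousOn e (Ici (t0 - τmax)))
    (he_bdd : BddAbove ((fun s => ν (e s)) '' Icc (t0 - τmax) t0))
    (hw_bdd : BddAbove ((fun s => ν (w s)) '' Ici t0))
    (hderiv : ∀ t, t0 ≤ t →
      HasDerivAt e ((A t).mulVec (e t) + (B t).mulVec (e (t - τ t)) + w t) t)
    (hA : ∀ t, t0 ≤ t → ∀ r, HasMatMeasure ν (A t).mulVec r → r ≤ -σhi)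
    (hB : ∀ t, t0 ≤ t → opNorm ν ν (B t).mulVec ≤ σlo)
    (lam : ℝ → ℝ)
    (hlam : ∀ t, t0 ≤ t → 0 < lam t ∧ lam t - σhi + σlo * Real.exp (lam t * τ t) = 0)
    (lamHat : ℝ) (hlamHat : lamHat = sInf (lam '' Ici t0)) :
    0 < lamHat ∧
      ∀ t, t0 ≤ t →
        ν (e t) ≤ sSup ((fun s => ν (e s)) '' Icc (t0 - τmax) t0)
              * Real.exp (-lamHat * (t - t0))
            + sSup ((fun s => ν (w s)) '' Ici t0) / (σhi - σlo) := by
  have hσhi : 0 < σhi := lt_of_le_of_lt hσlo hσ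
  -- ## Part 1 : positivity of lamHat
  have hlamne : (lam '' Ici t0).Nonempty := ⟨lam t0, t0, mem_Ici.mpr le_rfl, rfl⟩
  obtain ⟨lstar, hlstar_pos, hlow⟩ :
      ∃ lstar : ℝ, 0 < lstar ∧ ∀ t, t0 ≤ t → lstar ≤ lam t := by
    set f : ℝ → ℝ := fun l => l - σhi + σlo * Real.exp (l * τmax) with hf
    have hfc : ContinuousOn f (Icc 0 σhi) := by fun_prop
    have hf0 : f 0 < 0 := by
      have h1 : f 0 = σlo - σhi := by
        rw [hf]
        show (0:ℝ) - σhi + σlo * Real.exp (0 * τmax) = σlo - σhi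
        rw [zero_mul, Real.exp_zero]; ring
      rw [h1]; linarith
    have hfσ : 0 ≤ f σhi := by
      have h1 : (1:ℝ) ≤ Real.exp (σhi * τmax) := Real.one_le_exp (by positivity)
      simp only [hf]
      nlinarith
    obtain ⟨lstar, hlmem, hlstar⟩ : ∃ l ∈ Icc (0:ℝ) σhi, f l = 0 := by
      have h2 := intermediate_value_Icc hσhi.le hfc
      exact h2 ⟨hf0.le, hfσ⟩
    have hlstar_pos : 0 < lstar :=
      lt_of_le_of_ne hlmem.1 fun h => by rw [← h] at hlstar; linarith
    refine ⟨lstar, hlstar_pos, fun t ht => ?_⟩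
    by_contra hcon
    push_neg at hcon
    obtain ⟨hpos, heq⟩ := hlam t ht
    have h1 : Real.exp (lam t * τ t) ≤ Real.exp (lam t * τmax) :=
      Real.exp_le_exp.mpr (mul_le_mul_of_nonneg_left (hτ t).2 hpos.le)
    have h2 : 0 ≤ f (lam t) := by
      simp only [hf]
      nlinarith
    have h3 : f (lam t) < f lstar := by
      simp only [hf]
      have : Real.exp (lam t * τmax) ≤ Real.exp (lstar * τmax) :=
        Real.exp_le_exp.mpr (mul_le_mul_of_nonneg_right hcon.le hτmax)
      nlinarith
    rw [hlstar] at h3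
    linarith
  have hbddlam : BddBelow (lam '' Ici t0) := by
    refine ⟨lstar, ?_⟩
    rintro r ⟨t, ht, rfl⟩
    exact hlow t ht
  have hlamHat_pos : 0 < lamHat := by
    rw [hlamHat]
    refine lt_of_lt_of_le hlstar_pos (le_csInf hlamne ?_)
    rintro r ⟨t, ht, rfl⟩
    exact hlow t ht
  have hlamHat_le : ∀ t, t0 ≤ t → lamHat ≤ lam t := by
    intro t ht
    rw [hlamHat]
    exact csInf_le hbddlam ⟨t, ht, rfl⟩
  refine ⟨hlamHat_pos, ?_⟩
  -- ## Part 2 : the estimate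
  set M : ℝ := sSup ((fun s => ν (e s)) '' Icc (t0 - τmax) t0) with hM
  set W : ℝ := sSup ((fun s => ν (w s)) '' Ici t0) with hW
  set C : ℝ := W / (σhi - σlo) with hC
  have ht00 : t0 - τmax ≤ t0 := by linarith
  have hVinit : ∀ s, t0 - τmax ≤ s → s ≤ t0 → ν (e s) ≤ M :=
    fun s h1 h2 => le_csSup he_bdd ⟨s, ⟨h1, h2⟩, rfl⟩
  have hM0 : 0 ≤ M := (hν.1 (e t0)).trans (hVinit t0 ht00 le_rfl)
  have hWb : ∀ s, t0 ≤ s → ν (w s) ≤ W := fun s hs => le_csSup hw_bdd ⟨s, hs, rfl⟩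
  have hW0 : 0 ≤ W := (hν.1 (w t0)).trans (hWb t0 le_rfl)
  have hC0 : 0 ≤ C := div_nonneg hW0 (by linarith)
  have hCW : C * (σhi - σlo) = W := by
    rw [hC]; exact div_mul_cancel₀ W (sub_ne_zero.mpr (ne_of_gt hσ))
  rcases Nat.eq_zero_or_pos m with hm0 | hm
  · -- trivial case m = 0
    subst hm0
    intro t ht
    have he0 : e t = 0 := Subsingleton.elim _ _
    rw [he0, hν.zero']
    have h2 : 0 ≤ M * Real.exp (-lamHat * (t - t0)) :=
      mul_nonneg hM0 (Real.exp_pos _).le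
    linarith
  -- main case : key claim with slack ε
  have key : ∀ ε : ℝ, 0 < ε → ∀ t, t0 ≤ t →
      ν (e t) ≤ (M + ε) * Real.exp (-lamHat * (t - t0)) + C + ε := by
    intro ε hε
    by_contra hcon
    push_neg at hcon
    obtain ⟨tb, htb0, htb⟩ := hcon
    set φ : ℝ → ℝ := fun t => (M + ε) * Real.exp (-lamHat * (t - t0)) + C + ε with hφ
    have hφc : Continuous φ := by fun_prop
    have hφd : ∀ t : ℝ, HasDerivAt φ
        ((M + ε) * (Real.exp (-lamHat * (t - t0)) * -lamHat)) t := by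
      intro t
      have h1 : HasDerivAt (fun t : ℝ => -lamHat * (t - t0)) (-lamHat) t := by
        simpa using ((hasDerivAt_id t).sub_const t0).const_mul (-lamHat)
      exact ((h1.exp.const_mul (M + ε)).add_const C).add_const ε
    obtain ⟨Bad, hBad⟩ : ∃ s : Set ℝ, s = {t | t0 ≤ t ∧ φ t < ν (e t)} := ⟨_, rfl⟩
    have hBadmem : ∀ s : ℝ, s ∈ Bad ↔ t0 ≤ s ∧ φ s < ν (e s) := by
      intro s; rw [hBad]; exact Iff.rfl
    have hBadne : Bad.Nonempty := ⟨tb, (hBadmem tb).mpr ⟨htb0, htb⟩⟩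
    have hBadbd : BddBelow Bad := ⟨t0, fun t ht => ((hBadmem t).mp ht).1⟩
    obtain ⟨t₁, ht₁⟩ : ∃ x : ℝ, x = sInf Bad := ⟨_, rfl⟩
    have hBadlb : ∀ s ∈ Bad, t₁ ≤ s := by
      intro s hs; rw [ht₁]; exact csInf_le hBadbd hs
    have ht₁glb : ∀ b : ℝ, (∀ s ∈ Bad, b ≤ s) → b ≤ t₁ := by
      intro b hb; rw [ht₁]; exact le_csInf hBadne hb
    have ht₁0 : t0 ≤ t₁ := ht₁glb t0 fun t ht => ((hBadmem t).mp ht).1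
    have ht₁m : t0 - τmax ≤ t₁ := by linarith
    have hbelow : ∀ s, t0 ≤ s → s < t₁ → ν (e s) ≤ φ s := by
      intro s hs0 hst
      by_contra h'
      push_neg at h'
      exact absurd (hBadlb s ((hBadmem s).mpr ⟨hs0, h'⟩)) (not_le.mpr hst)
    have hVcont : ContinuousOn (fun t => ν (e t)) (Ici (t0 - τmax)) :=
      hν.continuous'.comp_continuousOn he_cont
    have happrox : ∀ δ : ℝ, 0 < δ → ∃ s ∈ Bad, s < t₁ + δ := by
      intro δ hδ
      by_contra h'
      push_neg at h'
      have : t₁ + δ ≤ t₁ := ht₁glb _ h'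
      linarith
    -- V t₁ ≥ φ t₁
    have hVge : φ t₁ ≤ ν (e t₁) := by
      choose s hsBad hslt using fun n : ℕ => happrox (1/((n:ℝ)+1)) (by positivity)
      have hts : ∀ n, t₁ ≤ s n := fun n => hBadlb _ (hsBad n)
      have htend : Tendsto s atTop (𝓝 t₁) := by
        refine tendsto_of_tendsto_of_tendsto_of_le_of_le
          (tendsto_const_nhds) ?_ hts (fun n => (hslt n).le)
        have := tendsto_one_div_add_atTop_nhds_zero_nat (𝕜 := ℝ)
        simpa using tendsto_const_nhds.add this
      have hVt : Tendsto (fun n => ν (e (s n))) atTop (𝓝 (ν (e t₁))) := by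
        have hcw : ContinuousWithinAt (fun t => ν (e t)) (Ici (t0 - τmax)) t₁ :=
          hVcont t₁ ht₁m
        exact hcw.tendsto.comp (tendsto_nhdsWithin_iff.mpr
          ⟨htend, Eventually.of_forall fun n => le_trans ht₁m (hts n)⟩)
      have hφt : Tendsto (fun n => φ (s n)) atTop (𝓝 (φ t₁)) :=
        (hφc.tendsto t₁).comp htend
      exact le_of_tendsto_of_tendsto' hφt hVt fun n =>
        (((hBadmem _).mp (hsBad n)).2).le
    have hVt0 : ν (e t0) < φ t0 := by
      have h1 : ν (e t0) ≤ M := hVinit t0 ht00 le_rfl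
      have h2 : φ t0 = (M + ε) * 1 + C + ε := by
        rw [hφ]; norm_num
      rw [h2]; linarith
    have hVle : ν (e t₁) ≤ φ t₁ := by
      rcases ht₁0.lt_or_eq with h01 | h01
      · set s : ℕ → ℝ := fun n => max t0 (t₁ - 1/((n:ℝ)+1)) with hs
        have hts0 : ∀ n, t0 ≤ s n := fun n => le_max_left _ _
        have htslt : ∀ n, s n < t₁ := by
          intro n
          have hp : (0:ℝ) < 1/((n:ℝ)+1) := by positivity
          exact max_lt h01 (by linarith)
        have htend : Tendsto s atTop (𝓝 t₁) := by
          have h1 : Tendsto (fun n : ℕ => t₁ - 1/((n:ℝ)+1)) atTop (𝓝 t₁) := by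
            have := tendsto_one_div_add_atTop_nhds_zero_nat (𝕜 := ℝ)
            simpa using tendsto_const_nhds.sub this
          have h2 := (tendsto_const_nhds :
            Tendsto (fun _ : ℕ => t0) atTop (𝓝 t0)).max h1
          rw [max_eq_right h01.le] at h2
          exact h2
        have hVt : Tendsto (fun n => ν (e (s n))) atTop (𝓝 (ν (e t₁))) := by
          have hcw : ContinuousWithinAt (fun t => ν (e t)) (Ici (t0 - τmax)) t₁ :=
            hVcont t₁ ht₁m
          exact hcw.tendsto.comp (tendsto_nhdsWithin_iff.mpr
            ⟨htend, Eventually.of_forall fun n => le_trans ht00 (hts0 n)⟩)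
        have hφt : Tendsto (fun n => φ (s n)) atTop (𝓝 (φ t₁)) :=
          (hφc.tendsto t₁).comp htend
        exact le_of_tendsto_of_tendsto' hVt hφt fun n =>
          hbelow (s n) (hts0 n) (htslt n)
      · rw [← h01]; exact hVt0.le
    have hVeq : ν (e t₁) = φ t₁ := le_antisymm hVle hVge
    -- delayed-state bound
    have hVτ : ν (e (t₁ - τ t₁)) ≤ (M + ε) *
        (Real.exp (-lamHat * (t₁ - t0)) * Real.exp (lamHat * τ t₁)) + C + ε := by
      have hE0 : (0:ℝ) < Real.exp (-lamHat * (t₁ - t0)) := Real.exp_pos _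
      have hs₂m : t0 - τmax ≤ t₁ - τ t₁ := by have := (hτ t₁).2; linarith
      have hs₂le : t₁ - τ t₁ ≤ t₁ := by have := (hτ t₁).1; linarith
      have hexp : Real.exp (-lamHat * (t₁ - τ t₁ - t0))
          = Real.exp (-lamHat * (t₁ - t0)) * Real.exp (lamHat * τ t₁) := by
        rw [← Real.exp_add]
        congr 1
        ring
      have hφs₂ : φ (t₁ - τ t₁) = (M + ε) *
          (Real.exp (-lamHat * (t₁ - t0)) * Real.exp (lamHat * τ t₁)) + C + ε := by
        simp only [hφ]
        rw [hexp]
      rcases lt_or_ge (t₁ - τ t₁) t0 with h' | h'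
      · have h1 : ν (e (t₁ - τ t₁)) ≤ M := hVinit _ hs₂m h'.le
        have h2 : (1:ℝ) ≤ Real.exp (-lamHat * (t₁ - τ t₁ - t0)) := by
          apply Real.one_le_exp
          have h3 := mul_nonneg hlamHat_pos.le
            (by linarith : (0:ℝ) ≤ t0 - (t₁ - τ t₁))
          nlinarith [h3]
        rw [hexp] at h2
        have h4 : (M + ε) * 1 ≤ (M + ε) *
            (Real.exp (-lamHat * (t₁ - t0)) * Real.exp (lamHat * τ t₁)) :=
          mul_le_mul_of_nonneg_left h2 (by linarith)
        linarith
      · rcases hs₂le.lt_or_eq with h'' | h''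
        · have := hbelow _ h' h''
          rwa [hφs₂] at this
        · refine le_of_eq ?_
          calc ν (e (t₁ - τ t₁)) = ν (e t₁) := by rw [h'']
            _ = φ t₁ := hVeq
            _ = φ (t₁ - τ t₁) := by rw [h'']
            _ = _ := hφs₂
    -- decay-rate inequality at t₁
    have hkey : σlo * Real.exp (lamHat * τ t₁) ≤ σhi - lamHat := by
      obtain ⟨hpos, heq⟩ := hlam t₁ ht₁0
      have h1 : lamHat ≤ lam t₁ := hlamHat_le t₁ ht₁0
      have h2 : Real.exp (lamHat * τ t₁) ≤ Real.exp (lam t₁ * τ t₁) :=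
        Real.exp_le_exp.mpr (mul_le_mul_of_nonneg_right h1 (hτ t₁).1)
      have h3 : σlo * Real.exp (lamHat * τ t₁) ≤ σlo * Real.exp (lam t₁ * τ t₁) :=
        mul_le_mul_of_nonneg_left h2 hσlo
      linarith
    -- derivative data at t₁
    have hd₁ : HasDerivAt e
        ((A t₁).mulVec (e t₁) + (B t₁).mulVec (e (t₁ - τ t₁)) + w t₁) t₁ :=
      hderiv t₁ ht₁0
    obtain ⟨K, hK, hKle⟩ := hν.exists_K
    obtain ⟨μA, hμA⟩ := exists_matMeasure hν hm (A t₁)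
    have hμAle : μA ≤ -σhi := hA t₁ ht₁0 μA hμA
    obtain ⟨η, hη⟩ : ∃ η : ℝ, η = ε * (σhi - σlo) := ⟨_, rfl⟩
    have hηpos : 0 < η := by rw [hη]; exact mul_pos hε (by linarith)
    have hV₁0 : 0 ≤ ν (e t₁) := hν.1 _
    obtain ⟨ε₂, hε₂⟩ : ∃ ε₂ : ℝ, ε₂ = η / (4 * (ν (e t₁) + 1)) := ⟨_, rfl⟩
    have hε₂pos : 0 < ε₂ := by rw [hε₂]; exact div_pos hηpos (by linarith)
    have hε₂V : ε₂ * ν (e t₁) ≤ η / 4 := by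
      rw [hε₂, div_mul_eq_mul_div, div_le_div_iff₀ (by linarith) (by norm_num)]
      linarith [mul_nonneg hηpos.le hV₁0, hηpos]
    obtain ⟨φ'₁, hφ'₁⟩ : ∃ y : ℝ, y =
      (M + ε) * (Real.exp (-lamHat * (t₁ - t0)) * -lamHat) := ⟨_, rfl⟩
    -- the drift bound
    have hD : -σhi * ν (e t₁) + σlo * ν (e (t₁ - τ t₁)) + W ≤ φ'₁ - η := by
      have h1 : σlo * ν (e (t₁ - τ t₁)) ≤ σlo * ((M + ε) *
          (Real.exp (-lamHat * (t₁ - t0)) * Real.exp (lamHat * τ t₁)) + C + ε) :=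
        mul_le_mul_of_nonneg_left hVτ hσlo
      have hX : (0:ℝ) ≤ (M + ε) * Real.exp (-lamHat * (t₁ - t0)) :=
        mul_nonneg (by linarith) (Real.exp_pos _).le
      have h2 : (M + ε) * Real.exp (-lamHat * (t₁ - t0)) *
            (σlo * Real.exp (lamHat * τ t₁))
          ≤ (M + ε) * Real.exp (-lamHat * (t₁ - t0)) * (σhi - lamHat) :=
        mul_le_mul_of_nonneg_left hkey hX
      have h3 : ν (e t₁) = (M + ε) * Real.exp (-lamHat * (t₁ - t0)) + C + ε := by
        rw [hVeq]
      rw [h3, hφ'₁, hη]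
      linarith [h1, h2, hCW]
    -- eventual bounds as t → t₁⁺
    have hlitO := hasDerivAt_iff_isLittleO.mp hd₁
    have hc₃pos : 0 < η / (4 * (K + 1)) := div_pos hηpos (by linarith)
    have hEv1 : ∀ᶠ t in 𝓝[>] t₁,
        ‖e t - e t₁ - (t - t₁) • ((A t₁).mulVec (e t₁)
          + (B t₁).mulVec (e (t₁ - τ t₁)) + w t₁)‖
          ≤ (η / (4 * (K + 1))) * (t - t₁) := by
      have h1 := (hlitO.def hc₃pos).filter_mono
        (nhdsWithin_le_nhds (s := Ioi t₁))
      filter_upwards [h1, self_mem_nhdsWithin] with t h2 h3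
      have h4 : (0:ℝ) < t - t₁ := sub_pos.mpr h3
      rwa [Real.norm_eq_abs, abs_of_pos h4] at h2
    have hsub : Tendsto (fun t => t - t₁) (𝓝[>] t₁) (𝓝[>] (0:ℝ)) := by
      apply tendsto_nhdsWithin_of_tendsto_nhds_of_eventually_within
      · have h1 : Tendsto (fun t : ℝ => t - t₁) (𝓝 t₁) (𝓝 (t₁ - t₁)) :=
          (continuous_id.sub continuous_const).tendsto t₁
        rw [sub_self] at h1
        exact h1.mono_left nhdsWithin_le_nhds
      · filter_upwards [self_mem_nhdsWithin] with t (ht : t₁ < t)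
        exact sub_pos.mpr ht
    have hTμ : Tendsto (fun h : ℝ =>
        (opNorm ν ν (fun x => x + h • (A t₁).mulVec x) - 1) / h)
        (𝓝[>] (0:ℝ)) (𝓝 μA) := hμA
    have hQev : ∀ᶠ h in 𝓝[>] (0:ℝ),
        opNorm ν ν (fun x => x + h • (A t₁).mulVec x) ≤ 1 + h * (-σhi + ε₂) := by
      have h1 : ∀ᶠ h in 𝓝[>] (0:ℝ),
          (opNorm ν ν (fun x => x + h • (A t₁).mulVec x) - 1) / h < -σhi + ε₂ :=
        hTμ.eventually_lt_const (by linarith)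
      filter_upwards [h1, self_mem_nhdsWithin] with h h2 (h3 : 0 < h)
      rw [div_lt_iff₀ h3] at h2
      linarith
    have hEv2 := hsub.eventually hQev
    have hslope : ∀ᶠ t in 𝓝[>] t₁,
        φ'₁ - η / 4 < (φ t - φ t₁) / (t - t₁) := by
      have h1 : Tendsto (slope φ t₁) (𝓝[≠] t₁) (𝓝 φ'₁) := by
        rw [hφ'₁]
        exact hasDerivAt_iff_tendsto_slope.mp (hφd t₁)
      have h2 : 𝓝[>] t₁ ≤ 𝓝[≠] t₁ :=
        nhdsWithin_mono t₁ fun t (ht : t₁ < t) => ne_of_gt ht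
      have h3 := (h1.mono_left h2).eventually_const_lt
        (show φ'₁ - η/4 < φ'₁ by linarith)
      filter_upwards [h3] with t h4
      rwa [slope_def_field] at h4
    -- the combined eventual strict bound
    have hfinal : ∀ᶠ t in 𝓝[>] t₁, ν (e t) < φ t := by
      filter_upwards [hEv1, hEv2, hslope, self_mem_nhdsWithin]
        with t h1 h2 h3 (h4 : t₁ < t)
      have hpos : (0:ℝ) < t - t₁ := sub_pos.mpr h4
      have hdec : e t = (e t₁ + (t - t₁) • ((A t₁).mulVec (e t₁)
          + (B t₁).mulVec (e (t₁ - τ t₁)) + w t₁))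
          + (e t - e t₁ - (t - t₁) • ((A t₁).mulVec (e t₁)
          + (B t₁).mulVec (e (t₁ - τ t₁)) + w t₁)) := by abel
      have s1 : ν (e t) ≤ ν (e t₁ + (t - t₁) • ((A t₁).mulVec (e t₁)
          + (B t₁).mulVec (e (t₁ - τ t₁)) + w t₁))
          + ν (e t - e t₁ - (t - t₁) • ((A t₁).mulVec (e t₁)
          + (B t₁).mulVec (e (t₁ - τ t₁)) + w t₁)) := by
        conv_lhs => rw [hdec]
        exact hν.triangle _ _
      have hdd : e t₁ + (t - t₁) • ((A t₁).mulVec (e t₁)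
          + (B t₁).mulVec (e (t₁ - τ t₁)) + w t₁)
          = (e t₁ + (t - t₁) • (A t₁).mulVec (e t₁))
            + ((t - t₁) • (B t₁).mulVec (e (t₁ - τ t₁)) + (t - t₁) • w t₁) := by
        rw [smul_add, smul_add]
        abel
      have s2 : ν (e t₁ + (t - t₁) • ((A t₁).mulVec (e t₁)
          + (B t₁).mulVec (e (t₁ - τ t₁)) + w t₁))
          ≤ ν (e t₁ + (t - t₁) • (A t₁).mulVec (e t₁))
            + ((t - t₁) * ν ((B t₁).mulVec (e (t₁ - τ t₁)))
              + (t - t₁) * ν (w t₁)) := by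
        rw [hdd]
        refine (hν.triangle _ _).trans ?_
        have h5 := hν.triangle ((t - t₁) • (B t₁).mulVec (e (t₁ - τ t₁)))
          ((t - t₁) • w t₁)
        rw [hν.smul_nonneg' hpos.le, hν.smul_nonneg' hpos.le] at h5
        linarith
      have s3 : ν (e t₁ + (t - t₁) • (A t₁).mulVec (e t₁))
          ≤ (1 + (t - t₁) * (-σhi + ε₂)) * ν (e t₁) := by
        have ha := nu_apply_le hν hm
          ((LinearMap.id + (t - t₁) • (A t₁).mulVecLin :
            (Fin m → ℝ) →ₗ[ℝ] (Fin m → ℝ))) (e t₁)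
        rw [← coe_id_add_smul] at ha
        exact ha.trans (mul_le_mul_of_nonneg_right h2 (hν.1 _))
      have s4 : ν ((B t₁).mulVec (e (t₁ - τ t₁))) ≤ σlo * ν (e (t₁ - τ t₁)) := by
        have hb := nu_apply_le hν hm ((B t₁).mulVecLin) (e (t₁ - τ t₁))
        rw [← coe_mulVecLin] at hb
        exact hb.trans (mul_le_mul_of_nonneg_right (hB t₁ ht₁0) (hν.1 _))
      have s5 : ν (w t₁) ≤ W := hWb t₁ ht₁0
      have s6 : ν (e t - e t₁ - (t - t₁) • ((A t₁).mulVec (e t₁)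
          + (B t₁).mulVec (e (t₁ - τ t₁)) + w t₁))
          ≤ K * ((η / (4 * (K + 1))) * (t - t₁)) :=
        (hKle _).trans (mul_le_mul_of_nonneg_left h1 hK.le)
      have s7 : K * (η / (4 * (K + 1))) * (t - t₁) ≤ η / 4 * (t - t₁) := by
        apply mul_le_mul_of_nonneg_right _ hpos.le
        rw [← mul_div_assoc, div_le_div_iff₀ (by linarith) (by norm_num)]
        linarith [mul_nonneg hK.le hηpos.le, hηpos]
      have b2 : (t - t₁) * ν ((B t₁).mulVec (e (t₁ - τ t₁)))
          ≤ (t - t₁) * (σlo * ν (e (t₁ - τ t₁))) :=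
        mul_le_mul_of_nonneg_left s4 hpos.le
      have b3 : (t - t₁) * ν (w t₁) ≤ (t - t₁) * W :=
        mul_le_mul_of_nonneg_left s5 hpos.le
      have hmain : ν (e t) ≤ ν (e t₁) + (t - t₁) * ((-σhi + ε₂) * ν (e t₁)
          + σlo * ν (e (t₁ - τ t₁)) + W + η / 4) := by
        linarith [s1, s2, s3, s6, s7, b2, b3]
      have hbr : (-σhi + ε₂) * ν (e t₁) + σlo * ν (e (t₁ - τ t₁)) + W + η / 4
          ≤ φ'₁ - η / 2 := by
        linarith [hD, hε₂V]
      have hmul : (t - t₁) * ((-σhi + ε₂) * ν (e t₁)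
          + σlo * ν (e (t₁ - τ t₁)) + W + η / 4)
          ≤ (t - t₁) * (φ'₁ - η / 2) :=
        mul_le_mul_of_nonneg_left hbr hpos.le
      have hφside : φ t₁ + (t - t₁) * (φ'₁ - η / 4) < φ t := by
        have h5 := (lt_div_iff₀ hpos).mp h3
        linarith
      have hlast : (t - t₁) * (φ'₁ - η / 2) < (t - t₁) * (φ'₁ - η / 4) := by
        apply mul_lt_mul_of_pos_left _ hpos
        linarith
      calc ν (e t) ≤ ν (e t₁) + (t - t₁) * ((-σhi + ε₂) * ν (e t₁)
            + σlo * ν (e (t₁ - τ t₁)) + W + η / 4) := hmain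
        _ ≤ φ t₁ + (t - t₁) * (φ'₁ - η / 2) := by
          rw [← hVeq]
          exact add_le_add_right hmul _
        _ < φ t₁ + (t - t₁) * (φ'₁ - η / 4) := by linarith
        _ < φ t := by linarith
    -- contradiction with the definition of t₁
    obtain ⟨u', hu', hsubset⟩ := mem_nhdsGT_iff_exists_Ioo_subset.mp hfinal
    have hu'' : t₁ < u' := hu'
    obtain ⟨sb, hsbBad, hsblt⟩ := happrox (u' - t₁) (by linarith)
    have hsb1 : t₁ ≤ sb := hBadlb _ hsbBad
    have hsb2 : φ sb < ν (e sb) := ((hBadmem sb).mp hsbBad).2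
    rcases hsb1.lt_or_eq with h2 | h2
    · have hmem : sb ∈ Ioo t₁ u' := ⟨h2, by linarith⟩
      have h3 := hsubset hmem
      exact absurd hsb2 (not_lt.mpr h3.le)
    · rw [← h2] at hsb2
      linarith [hVeq, hsb2]
  -- conclude from the key claim
  intro t ht
  by_contra hfin
  push_neg at hfin
  have hεpos : 0 < (ν (e t) - (M * Real.exp (-lamHat * (t - t0)) + C)) / 3 := by
    linarith
  have h1 := key _ hεpos t ht
  have hexple : Real.exp (-lamHat * (t - t0)) ≤ 1 := by
    apply Real.exp_le_one_iff.mpr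
    have h2 := mul_nonneg hlamHat_pos.le (sub_nonneg.mpr ht)
    nlinarith [h2]
  have h3 : ((ν (e t) - (M * Real.exp (-lamHat * (t - t0)) + C)) / 3)
        * Real.exp (-lamHat * (t - t0))
      ≤ ((ν (e t) - (M * Real.exp (-lamHat * (t - t0)) + C)) / 3) * 1 :=
    mul_le_mul_of_nonneg_left hexple hεpos.le
  linarith [h1, h3]
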